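/- Let n ≥ 3 and let 𝔉 = (𝓕_1, …, 𝓕_l) be any finite family of finite sequences of simple graphs, each graph in each sequence having fewer than n vertices. Let M be the real matrix with rows indexed by the sequences in 𝔉 and columns indexed by the isomorphism classes of n-vertex simple graphs, whose (𝓕, [H]) entry is the covering number c(𝓕, H). Then d(n) ≥ rank_ℝ(M), where d(n) is the number of equivalence classes of n-vertex simple graphs under the reconstruction relation ∼ (equivalently, the number of distinct decks of n-vertex graphs). -/

import Mathlib

open SimpleGraph

namespace ReconAux

instance subgraphFinite {V : Type*} [Finite V] {G : SimpleGraph V} : Finite G.Subgraph := by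
  classical
  haveI : Finite (SimpleGraph V) := by
    apply Finite.of_injective (fun H : SimpleGraph V => H.Adj)
    intro a b h; ext u v; exact iff_of_eq (congrFun (congrFun h u) v)
  exact Finite.of_injective _ SimpleGraph.Subgraph.verts_spanningCoe_injective

noncomputable instance subgraphFintype {V : Type*} [Finite V] (G : SimpleGraph V) :
    Fintype G.Subgraph := Fintype.ofFinite _

section MapInj

variable {V W : Type*} {A : SimpleGraph V} {B : SimpleGraph W} {f : A →g B}
  (hf : Function.Injective f)

theorem map_adj_iff (hf : Function.Injective f) (H : A.Subgraph) {a a' : V} :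
    (H.map f).Adj (f a) (f a') ↔ H.Adj a a' := by
  constructor
  · rintro ⟨u, v, h, hu, hv⟩
    rwa [hf hu, hf hv] at h
  · intro h; exact ⟨a, a', h, rfl, rfl⟩

theorem map_inj (hf : Function.Injective f) :
    Function.Injective (SimpleGraph.Subgraph.map f) := by
  intro H₁ H₂ h
  ext u v
  · constructor <;> intro hu
    · have : f u ∈ (H₂.map f).verts := h ▸ Set.mem_image_of_mem f hu
      obtain ⟨x, hx, hfx⟩ := this
      rwa [hf hfx] at hx
    · have : f u ∈ (H₁.map f).verts := h ▸ Set.mem_image_of_mem f hu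
      obtain ⟨x, hx, hfx⟩ := this
      rwa [hf hfx] at hx
  · rw [← map_adj_iff hf H₁, ← map_adj_iff hf H₂, h]

/-- The isomorphism between a subgraph and its image under an injective hom. -/
noncomputable def coeIsoMap (hf : Function.Injective f) (H : A.Subgraph) :
    H.coe ≃g (H.map f).coe := by
  refine ⟨Equiv.Set.imageOfInjOn f H.verts (hf.injOn), ?_⟩
  rintro ⟨a, ha⟩ ⟨a', ha'⟩
  simp only [Equiv.Set.imageOfInjOn, Equiv.coe_fn_mk, SimpleGraph.Subgraph.coe_adj]
  show (H.map f).Adj (f a) (f a') ↔ H.Adj a a'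
  exact map_adj_iff hf H

theorem map_iSup {ι : Sort*} (f : A →g B) (c : ι → A.Subgraph) :
    (⨆ i, c i).map f = ⨆ i, (c i).map f := by
  ext u v
  · simp [SimpleGraph.Subgraph.verts_iSup, Set.image_iUnion]
  · simp only [SimpleGraph.Subgraph.map_adj, SimpleGraph.Subgraph.iSup_adj, Relation.Map]
    constructor
    · rintro ⟨a, a', ⟨i, h⟩, rfl, rfl⟩; exact ⟨i, a, a', h, rfl, rfl⟩
    · rintro ⟨i, a, a', h, rfl, rfl⟩; exact ⟨a, a', ⟨i, h⟩, rfl, rfl⟩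

theorem exists_of_le_map_top (hf : Function.Injective f) {J : B.Subgraph}
    (h : J ≤ SimpleGraph.Subgraph.map f ⊤) : ∃ J₀ : A.Subgraph, J₀.map f = J := by
  classical
  refine ⟨⟨f ⁻¹' J.verts, fun a a' => J.Adj (f a) (f a'), ?_, ?_, ?_⟩, ?_⟩
  · intro a a' hadj
    have := h.2 hadj
    rw [map_adj_iff hf ⊤] at this
    exact this.adj_sub
  · intro a a' hadj
    exact J.edge_vert hadj
  · exact ⟨fun a a' hadj => J.adj_symm hadj⟩
  · ext u v
    · simp only [SimpleGraph.Subgraph.map_verts]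
      constructor
      · rintro ⟨x, hx, rfl⟩; exact hx
      · intro hu
        have := h.1 hu
        simp only [SimpleGraph.Subgraph.map_verts, SimpleGraph.Subgraph.verts_top] at this
        obtain ⟨x, -, rfl⟩ := this
        exact ⟨x, hu, rfl⟩
    · simp only [SimpleGraph.Subgraph.map_adj, Relation.Map]
      constructor
      · rintro ⟨a, a', h', rfl, rfl⟩; exact h'
      · intro hadj
        have h1 := h.2 hadj
        simp only [SimpleGraph.Subgraph.map_adj, Relation.Map] at h1
        obtain ⟨a, a', -, rfl, rfl⟩ := h1
        exact ⟨a, a', hadj, rfl, rfl⟩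

/-- Subgraphs of `A` correspond to subgraphs of `B` below `map f ⊤`. -/
noncomputable def mapIic (hf : Function.Injective f) :
    A.Subgraph ≃ {K : B.Subgraph // K ≤ SimpleGraph.Subgraph.map f ⊤} := by
  apply Equiv.ofBijective
    (fun J => ⟨J.map f, SimpleGraph.Subgraph.map_mono le_top⟩)
  constructor
  · intro a b h
    exact map_inj hf (congrArg Subtype.val h)
  · rintro ⟨K, hK⟩
    obtain ⟨J₀, rfl⟩ := exists_of_le_map_top hf hK
    exact ⟨J₀, rfl⟩

end MapInj

end ReconAux

namespace ReconAux

open SimpleGraph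

section Counts

/-- generalized subgraph count -/
noncomputable def sC {k : ℕ} (F : SimpleGraph (Fin k)) {W : Type*} (Gr : SimpleGraph W) : ℕ :=
  Nat.card {H : Gr.Subgraph // Nonempty (F ≃g H.coe)}

/-- generalized cover count -/
noncomputable def cC (L : List (Σ k : ℕ, SimpleGraph (Fin k))) {W : Type*}
    (Gr : SimpleGraph W) : ℕ :=
  Nat.card {C : Fin L.length → Gr.Subgraph //
    (∀ i, Nonempty ((L.get i).2 ≃g (C i).coe)) ∧ (⨆ i, C i) = ⊤}

variable {V W : Type*} {A : SimpleGraph V} {B : SimpleGraph W} {f : A →g B}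

theorem sC_map (hf : Function.Injective f) {k : ℕ} (F : SimpleGraph (Fin k)) :
    Nat.card {K : B.Subgraph //
        K ≤ SimpleGraph.Subgraph.map f ⊤ ∧ Nonempty (F ≃g K.coe)} = sC F A := by
  apply Nat.card_congr
  apply Equiv.symm
  refine Equiv.trans (Equiv.subtypeEquiv (mapIic hf) (fun J => ?_))
    ((Equiv.subtypeSubtypeEquivSubtypeInter _ _))
  constructor
  · rintro ⟨e⟩; exact ⟨e.trans (coeIsoMap hf J)⟩
  · rintro ⟨e⟩; exact ⟨e.trans (coeIsoMap hf J).symm⟩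

theorem cC_cover_map (hf : Function.Injective f) {m : ℕ}
    (F : Fin m → (Σ k : ℕ, SimpleGraph (Fin k))) :
    Nat.card {C : Fin m → B.Subgraph //
        (∀ i, Nonempty ((F i).2 ≃g (C i).coe)) ∧ (⨆ i, C i) = SimpleGraph.Subgraph.map f ⊤} =
    Nat.card {C : Fin m → A.Subgraph //
        (∀ i, Nonempty ((F i).2 ≃g (C i).coe)) ∧ (⨆ i, C i) = ⊤} := by
  apply Nat.card_congr
  apply Equiv.symm
  refine Equiv.ofBijective (fun C => ⟨fun i => (C.1 i).map f, ?_, ?_⟩) ⟨?_, ?_⟩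
  · intro i
    obtain ⟨e⟩ := C.2.1 i
    exact ⟨e.trans (coeIsoMap hf _)⟩
  · rw [← map_iSup, C.2.2]
  · rintro ⟨C₁, h₁⟩ ⟨C₂, h₂⟩ h
    have := congrArg Subtype.val h
    simp only at this
    apply Subtype.ext
    funext i
    exact map_inj hf (congrFun this i)
  · rintro ⟨C, hC1, hC2⟩
    have hle : ∀ i, C i ≤ SimpleGraph.Subgraph.map f ⊤ := by
      intro i; rw [← hC2]; exact le_iSup C i
    choose J hJ using fun i => exists_of_le_map_top hf (hle i)
    refine ⟨⟨J, ?_, ?_⟩, ?_⟩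
    · intro i
      obtain ⟨e⟩ := hC1 i
      refine ⟨(e.trans ?_)⟩
      rw [← hJ i]
      exact (coeIsoMap hf (J i)).symm
    · apply map_inj hf
      rw [map_iSup]
      simp_rw [hJ]
      exact hC2
    · apply Subtype.ext
      show (fun i => SimpleGraph.Subgraph.map f (J i)) = C
      funext i
      exact hJ i

theorem map_top_of_iso (e : A ≃g B) :
    SimpleGraph.Subgraph.map e.toHom (⊤ : A.Subgraph) = ⊤ := by
  ext u v
  · simp only [SimpleGraph.Subgraph.map_verts, SimpleGraph.Subgraph.verts_top]
    constructor
    · intro _; trivial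
    · intro _; exact ⟨e.symm u, trivial, e.apply_symm_apply u⟩
  · simp only [SimpleGraph.Subgraph.map_adj, SimpleGraph.Subgraph.top_adj, Relation.Map]
    constructor
    · rintro ⟨a, a', h, rfl, rfl⟩; exact e.map_adj_iff.mpr h
    · intro h
      exact ⟨e.symm u, e.symm v, by simpa using e.symm.map_adj_iff.mpr h,
        e.apply_symm_apply u, e.apply_symm_apply v⟩

theorem map_hom_top (K : A.Subgraph) :
    SimpleGraph.Subgraph.map K.hom (⊤ : K.coe.Subgraph) = K := by
  ext u v
  · simp only [SimpleGraph.Subgraph.map_verts, SimpleGraph.Subgraph.verts_top]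
    constructor
    · rintro ⟨⟨x, hx⟩, -, rfl⟩; exact hx
    · intro hu; exact ⟨⟨u, hu⟩, trivial, rfl⟩
  · simp only [SimpleGraph.Subgraph.map_adj, SimpleGraph.Subgraph.top_adj, Relation.Map]
    constructor
    · rintro ⟨⟨a, ha⟩, ⟨a', ha'⟩, h, rfl, rfl⟩; exact h
    · intro h
      exact ⟨⟨u, K.edge_vert h⟩, ⟨v, K.edge_vert h.symm⟩, h, rfl, rfl⟩

theorem sC_iso (e : A ≃g B) {k : ℕ} (F : SimpleGraph (Fin k)) : sC F A = sC F B := by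
  rw [← sC_map (f := e.toHom) e.injective F]
  unfold sC
  apply Nat.card_congr
  apply Equiv.subtypeEquivRight
  intro K
  rw [map_top_of_iso e]
  simp

theorem cC_iso (e : A ≃g B) (L : List (Σ k : ℕ, SimpleGraph (Fin k))) : cC L A = cC L B := by
  unfold cC
  rw [← cC_cover_map (f := e.toHom) e.injective (fun i => L.get i)]
  congr 1
  apply congrArg
  ext C
  rw [map_top_of_iso e]

/-- covers with union `K` are counted by `cC` of the coerced subgraph. -/
theorem coverAt_eq (L : List (Σ k : ℕ, SimpleGraph (Fin k))) (K : A.Subgraph) :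
    Nat.card {C : Fin L.length → A.Subgraph //
        (∀ i, Nonempty ((L.get i).2 ≃g (C i).coe)) ∧ (⨆ i, C i) = K} = cC L K.coe := by
  unfold cC
  rw [← cC_cover_map (f := K.hom) SimpleGraph.Subgraph.hom_injective (fun i => L.get i)]
  congr 1
  apply congrArg
  ext C
  rw [map_hom_top K]

end Counts

end ReconAux

namespace ReconAux

open SimpleGraph

section Kocay

variable {V : Type*} [Finite V] {A : SimpleGraph V}

theorem prod_sC_eq_sum (L : List (Σ k : ℕ, SimpleGraph (Fin k))) (A : SimpleGraph V) :
    (∏ i : Fin L.length, sC (L.get i).2 A) = ∑ K : A.Subgraph, cC L K.coe := by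
  classical
  calc (∏ i : Fin L.length, sC (L.get i).2 A)
      = Nat.card (∀ i : Fin L.length, {H : A.Subgraph // Nonempty ((L.get i).2 ≃g H.coe)}) := by
        haveI : ∀ i : Fin L.length,
            Fintype {H : A.Subgraph // Nonempty ((L.get i).2 ≃g H.coe)} :=
          fun i => Fintype.ofFinite _
        rw [Nat.card_eq_fintype_card, Fintype.card_pi]
        apply Finset.prod_congr rfl
        intro i _
        rw [sC, Nat.card_eq_fintype_card]
    _ = Nat.card {C : Fin L.length → A.Subgraph //
          ∀ i, Nonempty ((L.get i).2 ≃g (C i).coe)} := by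
        exact (Nat.card_congr Equiv.subtypePiEquivPi).symm
    _ = Nat.card (Σ K : A.Subgraph, {C : Fin L.length → A.Subgraph //
          (∀ i, Nonempty ((L.get i).2 ≃g (C i).coe)) ∧ (⨆ i, C i) = K}) := by
        apply Nat.card_congr
        refine Equiv.trans
          (Equiv.sigmaFiberEquiv
            (fun C : {C : Fin L.length → A.Subgraph //
              ∀ i, Nonempty ((L.get i).2 ≃g (C i).coe)} => ⨆ i, C.1 i)).symm ?_
        apply Equiv.sigmaCongrRight
        intro K
        exact (Equiv.subtypeSubtypeEquivSubtypeInter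
          (fun C : Fin L.length → A.Subgraph => ∀ i, Nonempty ((L.get i).2 ≃g (C i).coe))
          (fun C => (⨆ i, C i) = K))
    _ = ∑ K : A.Subgraph, cC L K.coe := by
        haveI : ∀ K : A.Subgraph, Fintype {C : Fin L.length → A.Subgraph //
            (∀ i, Nonempty ((L.get i).2 ≃g (C i).coe)) ∧ (⨆ i, C i) = K} :=
          fun K => Fintype.ofFinite _
        rw [Nat.card_eq_fintype_card, Fintype.card_sigma]
        apply Finset.sum_congr rfl
        intro K _
        rw [← coverAt_eq, Nat.card_eq_fintype_card]

end Kocay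

end ReconAux

namespace ReconAux

open SimpleGraph

section Kelly

universe u
variable {V : Type u} {W : Type u}

/-- Equivalence of subgraph lattices induced by a graph isomorphism. -/
noncomputable def subgraphEquiv {A : SimpleGraph V} {B : SimpleGraph W} (e : A ≃g B) :
    A.Subgraph ≃ B.Subgraph :=
  (mapIic e.injective).trans (Equiv.subtypeUnivEquiv (by rw [map_top_of_iso e]; intro x; exact le_top))

theorem subgraphEquiv_apply {A : SimpleGraph V} {B : SimpleGraph W} (e : A ≃g B)
    (K : A.Subgraph) : subgraphEquiv e K = K.map e.toHom := rfl

/-- the weighted count of `j`-vertex subgraphs, weight `g` applied to the subgraph. -/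
noncomputable def SCle (g : ∀ {W : Type u}, SimpleGraph W → ℕ) (j : ℕ)
    {V : Type u} [Finite V] (A : SimpleGraph V) : ℕ :=
  ∑ K : A.Subgraph, if Nat.card K.verts = j then g K.coe else 0

/-- invariance of `g` under isomorphisms -/
def GInv (g : ∀ {W : Type u}, SimpleGraph W → ℕ) : Prop :=
  ∀ {W W' : Type u} (A : SimpleGraph W) (B : SimpleGraph W'), (A ≃g B) → g A = g B

theorem SCle_iso {g : ∀ {W : Type u}, SimpleGraph W → ℕ} (hg : GInv g) (j : ℕ)
    [Finite V] [Finite W] {A : SimpleGraph V} {B : SimpleGraph W} (e : A ≃g B) :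
    SCle g j A = SCle g j B := by
  unfold SCle
  apply Fintype.sum_equiv (subgraphEquiv e)
  intro K
  have hcard : Nat.card (subgraphEquiv e K).verts = Nat.card K.verts :=
    Nat.card_congr ((coeIsoMap e.injective K).toEquiv).symm
  rw [hcard]
  rcases eq_or_ne (Nat.card K.verts) j with h | h
  · rw [if_pos h, if_pos h]
    exact hg _ _ (coeIsoMap e.injective K)
  · rw [if_neg h, if_neg h]

end Kelly

end ReconAux

namespace ReconAux

open SimpleGraph

section Kelly2

open scoped Classical

variable {V : Type} [Fintype V]

theorem le_map_induce_top_iff {A : SimpleGraph V} (s : Set V) (K : A.Subgraph) :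
    K ≤ SimpleGraph.Subgraph.map (SimpleGraph.Embedding.induce s (G := A)).toHom ⊤ ↔
      K.verts ⊆ s := by
  have hverts : (SimpleGraph.Subgraph.map
      (SimpleGraph.Embedding.induce s (G := A)).toHom (⊤ : (A.induce s).Subgraph)).verts = s := by
    simp only [SimpleGraph.Subgraph.map_verts, SimpleGraph.Subgraph.verts_top, Set.image_univ]
    exact Subtype.range_coe
  constructor
  · intro h
    exact subset_trans h.1 (le_of_eq hverts)
  · intro h
    constructor
    · rw [hverts]; exact h
    · intro u v huv
      simp only [SimpleGraph.Subgraph.map_adj, Relation.Map, SimpleGraph.Subgraph.top_adj]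
      exact ⟨⟨u, h (K.edge_vert huv)⟩, ⟨v, h (K.edge_vert huv.symm)⟩,
        by simpa using K.adj_sub huv, rfl, rfl⟩

theorem induce_emb_injective (A : SimpleGraph V) (s : Set V) :
    Function.Injective (SimpleGraph.Embedding.induce s (G := A)).toHom := by
  intro a b h; exact Subtype.ext h

theorem SCle_induce {g : ∀ {W : Type}, SimpleGraph W → ℕ} (hg : GInv g) (j : ℕ)
    (A : SimpleGraph V) (s : Set V) :
    SCle g j (A.induce s) =
      ∑ K : A.Subgraph, if K.verts ⊆ s ∧ Nat.card K.verts = j then g K.coe else 0 := by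
  have hinj := induce_emb_injective A s
  set T := SimpleGraph.Subgraph.map (SimpleGraph.Embedding.induce s (G := A)).toHom
    (⊤ : (A.induce s).Subgraph) with hT
  calc SCle g j (A.induce s)
      = ∑ J : (A.induce s).Subgraph, if Nat.card J.verts = j then g J.coe else 0 := rfl
    _ = ∑ K : {K : A.Subgraph // K ≤ T}, if Nat.card K.1.verts = j then g K.1.coe else 0 := by
        apply Fintype.sum_equiv (mapIic hinj)
        intro J
        have hcard : Nat.card ((mapIic hinj J : {K : A.Subgraph // K ≤ T}) : A.Subgraph).verts
            = Nat.card J.verts := Nat.card_congr ((coeIsoMap hinj J).toEquiv).symm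
        rw [hcard]
        rcases eq_or_ne (Nat.card J.verts) j with h | h
        · rw [if_pos h, if_pos h]
          exact hg _ _ (coeIsoMap hinj J)
        · rw [if_neg h, if_neg h]
    _ = ∑ K ∈ Finset.univ.filter (fun K : A.Subgraph => K ≤ T),
          if Nat.card K.verts = j then g K.coe else 0 := by
        rw [← Finset.sum_subtype_eq_sum_filter]
        apply Finset.sum_congr
        · ext K; simp [Finset.mem_subtype]
        · intro K _; rfl
    _ = ∑ K : A.Subgraph, if K.verts ⊆ s ∧ Nat.card K.verts = j then g K.coe else 0 := by
        rw [Finset.sum_filter]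
        apply Finset.sum_congr rfl
        intro K _
        rw [← le_map_induce_top_iff s K, ← hT]
        by_cases h1 : K ≤ T <;> by_cases h2 : Nat.card K.verts = j <;> simp [h1, h2]

theorem kelly_sum {g : ∀ {W : Type}, SimpleGraph W → ℕ} (hg : GInv g) {n j : ℕ}
    (G : SimpleGraph (Fin n)) :
    (n - j) * SCle g j G = ∑ v : Fin n, SCle g j (G.induce {v}ᶜ) := by
  have key : ∀ K : G.Subgraph, (∑ v : Fin n,
      if K.verts ⊆ ({v}ᶜ : Set (Fin n)) ∧ Nat.card K.verts = j then g K.coe else 0) =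
      if Nat.card K.verts = j then (n - j) * g K.coe else 0 := by
    intro K
    rcases eq_or_ne (Nat.card K.verts) j with hc | hc
    · rw [if_pos hc]
      have hmem : ∀ v : Fin n, (K.verts ⊆ ({v}ᶜ : Set (Fin n)) ∧ Nat.card K.verts = j)
          ↔ v ∉ K.verts := by
        intro v
        rw [Set.subset_compl_singleton_iff]
        exact and_iff_left hc
      calc (∑ v : Fin n,
          if K.verts ⊆ ({v}ᶜ : Set (Fin n)) ∧ Nat.card K.verts = j then g K.coe else 0)
          = ∑ v : Fin n, if v ∉ K.verts then g K.coe else 0 := by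
            apply Finset.sum_congr rfl
            intro v _
            by_cases h : v ∉ K.verts
            · rw [if_pos h, if_pos ((hmem v).mpr h)]
            · rw [if_neg h, if_neg (fun hh => h ((hmem v).mp hh))]
        _ = (Finset.univ.filter (fun v : Fin n => v ∉ K.verts)).card * g K.coe := by
            rw [← Finset.sum_filter, Finset.sum_const, smul_eq_mul]
        _ = (n - j) * g K.coe := by
            congr 1
            have h1 := Finset.card_filter_add_card_filter_not
              (s := Finset.univ) (p := fun v : Fin n => v ∈ K.verts)
            have h2 : (Finset.univ.filter (fun v : Fin n => v ∈ K.verts)).card = j := by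
              rw [← Fintype.card_subtype]
              rw [← hc, Nat.card_eq_fintype_card]
            simp only [Finset.card_univ, Fintype.card_fin] at h1
            omega
    · rw [if_neg hc]
      apply Finset.sum_eq_zero
      intro v _
      rw [if_neg (fun hh => hc hh.2)]
  calc (n - j) * SCle g j G
      = ∑ K : G.Subgraph, if Nat.card K.verts = j then (n - j) * g K.coe else 0 := by
        rw [SCle, Finset.mul_sum]
        apply Finset.sum_congr rfl
        intro K _
        rw [mul_ite, mul_zero]
    _ = ∑ K : G.Subgraph, (∑ v : Fin n,
          if K.verts ⊆ ({v}ᶜ : Set (Fin n)) ∧ Nat.card K.verts = j then g K.coe else 0) := by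
        apply Finset.sum_congr rfl
        intro K _
        rw [key K]
    _ = ∑ v : Fin n, SCle g j (G.induce {v}ᶜ) := by
        rw [Finset.sum_comm]
        apply Finset.sum_congr rfl
        intro v _
        rw [SCle_induce hg]

theorem SCle_recon {g : ∀ {W : Type}, SimpleGraph W → ℕ} (hg : GInv g) {n j : ℕ}
    (hj : j < n) {G G' : SimpleGraph (Fin n)}
    (h : ∃ f : Fin n ≃ Fin n, ∀ v, Nonempty ((G.induce ({v}ᶜ : Set (Fin n))) ≃g
      (G'.induce ({f v}ᶜ : Set (Fin n))))) :
    SCle g j G = SCle g j G' := by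
  obtain ⟨f, hf⟩ := h
  have h1 := kelly_sum hg (j := j) G
  have h2 := kelly_sum hg (j := j) G'
  have h3 : (∑ v : Fin n, SCle g j (G.induce {v}ᶜ)) =
      ∑ v : Fin n, SCle g j (G'.induce {v}ᶜ) := by
    rw [← Equiv.sum_comp f (fun w => SCle g j (G'.induce {w}ᶜ))]
    apply Finset.sum_congr rfl
    intro v _
    exact SCle_iso hg j (hf v).some
  have h4 : (n - j) * SCle g j G = (n - j) * SCle g j G' := by rw [h1, h2, h3]
  exact Nat.eq_of_mul_eq_mul_left (by omega) h4

end Kelly2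

end ReconAux

namespace ReconAux

open SimpleGraph

section Span

theorem coe_edgeSet_card {V : Type*} {A : SimpleGraph V} (K : A.Subgraph) :
    Nat.card K.coe.edgeSet = Nat.card K.edgeSet := by
  apply Nat.card_congr
  exact (Equiv.Set.imageOfInjOn _ _ ((Sym2.map.injective Subtype.val_injective).injOn)).trans
    (Equiv.setCongr (SimpleGraph.Subgraph.image_coe_edgeSet_coe K))

theorem edge_card_iso {V W : Type*} {A : SimpleGraph V} {B : SimpleGraph W} (e : A ≃g B) :
    Nat.card A.edgeSet = Nat.card B.edgeSet :=
  Nat.card_congr e.mapEdgeSet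

/-- number of spanning subgraphs of `G` isomorphic to `X` -/
noncomputable def spanCount {n : ℕ} (X G : SimpleGraph (Fin n)) : ℕ :=
  Nat.card {K : G.Subgraph // Nat.card K.verts = n ∧ Nonempty (X ≃g K.coe)}

theorem verts_univ_of_card {n : ℕ} {G : SimpleGraph (Fin n)} {K : G.Subgraph}
    (h : Nat.card K.verts = n) : K.verts = Set.univ := by
  apply Set.eq_of_subset_of_ncard_le (Set.subset_univ _)
  rw [Set.ncard_univ, ← Nat.card_coe_set_eq, h, Nat.card_eq_fintype_card, Fintype.card_fin]

/-- an isomorphism `G ≃g (⊤ : G.Subgraph).coe`. -/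
noncomputable def topCoeIso {V : Type*} (G : SimpleGraph V) : G ≃g (⊤ : G.Subgraph).coe :=
  SimpleGraph.Subgraph.spanningCoeEquivCoeOfSpanning ⊤ (fun _ => trivial)

theorem eq_top_of_card {V : Type*} [Finite V] {G : SimpleGraph V} {K : G.Subgraph}
    (hv : K.verts = Set.univ) (he : Nat.card G.edgeSet ≤ Nat.card K.edgeSet) : K = ⊤ := by
  have hsub : K.edgeSet ⊆ G.edgeSet := SimpleGraph.Subgraph.edgeSet_subset K
  have : K.edgeSet = G.edgeSet := by
    apply Set.eq_of_subset_of_ncard_le hsub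
    rwa [← Nat.card_coe_set_eq, ← Nat.card_coe_set_eq]
  ext u v
  · simp [hv]
  · rw [← SimpleGraph.Subgraph.mem_edgeSet, this]
    simp [SimpleGraph.mem_edgeSet]

theorem spanCount_self {n : ℕ} (H : SimpleGraph (Fin n)) : spanCount H H = 1 := by
  rw [spanCount, Nat.card_eq_one_iff_unique]
  constructor
  · constructor
    rintro ⟨K, hK1, ⟨eK⟩⟩ ⟨K', hK1', ⟨eK'⟩⟩
    have hedge : ∀ (J : H.Subgraph), Nonempty (H ≃g J.coe) → J.verts = Set.univ → J = ⊤ := by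
      rintro J ⟨e⟩ hv
      apply eq_top_of_card hv
      rw [← coe_edgeSet_card, ← edge_card_iso e]
    have h1 := hedge K ⟨eK⟩ (verts_univ_of_card hK1)
    have h2 := hedge K' ⟨eK'⟩ (verts_univ_of_card hK1')
    apply Subtype.ext
    show K = K'
    rw [h1, h2]
  · refine ⟨⟨⊤, ?_, ⟨topCoeIso H⟩⟩⟩
    show Nat.card (Set.univ : Set (Fin n)) = n
    rw [Nat.card_coe_set_eq, Set.ncard_univ, Nat.card_eq_fintype_card, Fintype.card_fin]

theorem spanCount_edges {n : ℕ} {X H : SimpleGraph (Fin n)} (h : spanCount X H ≠ 0) :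
    Nat.card X.edgeSet ≤ Nat.card H.edgeSet ∧
      (Nat.card X.edgeSet = Nat.card H.edgeSet → Nonempty (X ≃g H)) := by
  rw [spanCount] at h
  have hne : Nonempty {K : H.Subgraph // Nat.card K.verts = n ∧ Nonempty (X ≃g K.coe)} := by
    rcases Nat.card_ne_zero.mp h with ⟨h1, -⟩
    exact h1
  obtain ⟨K, hKv, ⟨e⟩⟩ := hne
  have hX : Nat.card X.edgeSet = Nat.card K.edgeSet := by
    rw [edge_card_iso e, coe_edgeSet_card]
  have hle : Nat.card K.edgeSet ≤ Nat.card H.edgeSet := by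
    rw [Nat.card_coe_set_eq, Nat.card_coe_set_eq]
    exact Set.ncard_le_ncard (SimpleGraph.Subgraph.edgeSet_subset K) (Set.toFinite _)
  constructor
  · rw [hX]; exact hle
  · intro heq
    have : K = ⊤ := eq_top_of_card (verts_univ_of_card hKv) (by omega)
    rw [this] at e
    exact ⟨e.trans (topCoeIso H).symm⟩

end Span

end ReconAux

namespace ReconAux

open SimpleGraph

section Group

open scoped Classical

/-- indicator invariant: subgraphs isomorphic to `F` -/
noncomputable def gSub {k : ℕ} (F : SimpleGraph (Fin k)) : ∀ {W : Type}, SimpleGraph W → ℕ :=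
  fun {_} H => if Nonempty (F ≃g H) then 1 else 0

theorem gSub_inv {k : ℕ} (F : SimpleGraph (Fin k)) : GInv (gSub F) := by
  intro W W' A B e
  show (if Nonempty (F ≃g A) then 1 else 0) = (if Nonempty (F ≃g B) then 1 else 0)
  by_cases h : Nonempty (F ≃g A)
  · rw [if_pos h, if_pos (h.elim fun e' => ⟨e'.trans e⟩)]
  · rw [if_neg h, if_neg (fun hh => h (hh.elim fun e' => ⟨e'.trans e.symm⟩))]

/-- cover-count invariant -/
noncomputable def gCov (L : List (Σ k : ℕ, SimpleGraph (Fin k))) :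
    ∀ {W : Type}, SimpleGraph W → ℕ :=
  fun {_} H => cC L H

theorem gCov_inv (L : List (Σ k : ℕ, SimpleGraph (Fin k))) : GInv (gCov L) := by
  intro W W' A B e
  exact cC_iso e L

theorem sC_eq_SCle {k n : ℕ} (F : SimpleGraph (Fin k)) (G : SimpleGraph (Fin n)) :
    sC F G = SCle (gSub F) k G := by
  rw [sC, Nat.card_eq_fintype_card, Fintype.card_subtype, Finset.card_filter, SCle]
  apply Finset.sum_congr rfl
  intro K _
  by_cases h : Nonempty (F ≃g K.coe)
  · have hcard : Nat.card K.verts = k := by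
      obtain ⟨e⟩ := h
      rw [Nat.card_congr e.toEquiv.symm, Nat.card_eq_fintype_card, Fintype.card_fin]
    rw [if_pos h, if_pos hcard, gSub, if_pos h]
  · rw [if_neg h, gSub]
    by_cases hcard : Nat.card K.verts = k
    · rw [if_pos hcard, if_neg h]
    · rw [if_neg hcard]

theorem card_verts_le {n : ℕ} {G : SimpleGraph (Fin n)} (K : G.Subgraph) :
    Nat.card K.verts ≤ n := by
  have := Nat.card_mono (Set.finite_univ (α := Fin n)) (Set.subset_univ K.verts)
  have h2 : Nat.card (Set.univ : Set (Fin n)) = n := by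
    rw [Nat.card_coe_set_eq, Set.ncard_univ, Nat.card_eq_fintype_card, Fintype.card_fin]
  omega

theorem kocay_split {n : ℕ} (L : List (Σ k : ℕ, SimpleGraph (Fin k)))
    (G : SimpleGraph (Fin n)) :
    (∏ i : Fin L.length, sC (L.get i).2 G) =
      (∑ j ∈ Finset.range n, SCle (gCov L) j G) + SCle (gCov L) n G := by
  rw [prod_sC_eq_sum L G]
  have step : (∑ K : G.Subgraph, cC L K.coe) =
      ∑ j ∈ Finset.range (n + 1), SCle (gCov L) j G := by
    have : ∀ K : G.Subgraph, cC L K.coe =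
        ∑ j ∈ Finset.range (n + 1), if Nat.card K.verts = j then gCov L K.coe else 0 := by
      intro K
      rw [Finset.sum_ite_eq]
      rw [if_pos (Finset.mem_range.mpr (Nat.lt_succ_of_le (card_verts_le K)))]
      rfl
    calc (∑ K : G.Subgraph, cC L K.coe)
        = ∑ K : G.Subgraph, ∑ j ∈ Finset.range (n + 1),
            if Nat.card K.verts = j then gCov L K.coe else 0 := by
          exact Finset.sum_congr rfl fun K _ => this K
      _ = ∑ j ∈ Finset.range (n + 1), SCle (gCov L) j G := Finset.sum_comm
  rw [step, Finset.sum_range_succ]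

theorem SCle_top_group {n : ℕ} (L : List (Σ k : ℕ, SimpleGraph (Fin k)))
    (G : SimpleGraph (Fin n)) (R : Finset (SimpleGraph (Fin n)))
    (hR : ∀ A : SimpleGraph (Fin n), ∃! X, X ∈ R ∧ Nonempty (A ≃g X)) :
    SCle (gCov L) n G = ∑ X ∈ R, spanCount X G * cC L X := by
  have step1 : ∀ K : G.Subgraph,
      (if Nat.card K.verts = n then gCov L K.coe else 0) =
      ∑ X ∈ R, if Nat.card K.verts = n ∧ Nonempty (X ≃g K.coe) then cC L X else 0 := by
    intro K
    by_cases hc : Nat.card K.verts = n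
    · rw [if_pos hc]
      have hspan : K.IsSpanning := by
        intro v
        rw [verts_univ_of_card hc]; trivial
      have e0 : K.coe ≃g K.spanningCoe :=
        (SimpleGraph.Subgraph.spanningCoeEquivCoeOfSpanning K hspan).symm
      obtain ⟨X₀, ⟨hX₀R, ⟨e1⟩⟩, huniq⟩ := hR K.spanningCoe
      rw [Finset.sum_eq_single_of_mem X₀ hX₀R]
      · rw [if_pos ⟨hc, ⟨e1.symm.trans e0.symm⟩⟩]
        exact cC_iso (e0.trans e1) L
      · intro X hX hXne
        rw [if_neg]
        rintro ⟨-, ⟨e2⟩⟩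
        exact hXne (huniq X ⟨hX, ⟨e0.symm.trans e2.symm⟩⟩)
    · rw [if_neg hc]
      symm
      apply Finset.sum_eq_zero
      intro X _
      rw [if_neg (fun hh => hc hh.1)]
  calc SCle (gCov L) n G
      = ∑ K : G.Subgraph, ∑ X ∈ R,
          if Nat.card K.verts = n ∧ Nonempty (X ≃g K.coe) then cC L X else 0 := by
        rw [SCle]
        exact Finset.sum_congr rfl fun K _ => step1 K
    _ = ∑ X ∈ R, ∑ K : G.Subgraph,
          if Nat.card K.verts = n ∧ Nonempty (X ≃g K.coe) then cC L X else 0 := Finset.sum_comm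
    _ = ∑ X ∈ R, spanCount X G * cC L X := by
        apply Finset.sum_congr rfl
        intro X _
        rw [← Finset.sum_filter, Finset.sum_const, smul_eq_mul]
        congr 1
        rw [spanCount, Nat.card_eq_fintype_card, Fintype.card_subtype]

end Group

end ReconAux

namespace ReconAux

open SimpleGraph

theorem span_recon {n : ℕ} (L : List (Σ k : ℕ, SimpleGraph (Fin k)))
    (hL : ∀ F ∈ L, F.1 < n) (hn : 0 < n) {G G' : SimpleGraph (Fin n)}
    (hrec : ∃ f : Fin n ≃ Fin n, ∀ v, Nonempty ((G.induce ({v}ᶜ : Set (Fin n))) ≃g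
      (G'.induce ({f v}ᶜ : Set (Fin n))))) :
    SCle (gCov L) n G = SCle (gCov L) n G' := by
  have h1 := kocay_split L G
  have h2 := kocay_split L G'
  have hprod : (∏ i : Fin L.length, sC (L.get i).2 G)
      = ∏ i : Fin L.length, sC (L.get i).2 G' := by
    apply Finset.prod_congr rfl
    intro i _
    rw [sC_eq_SCle, sC_eq_SCle]
    exact SCle_recon (gSub_inv _) (hL _ (L.get_mem i)) hrec
  have hsum : (∑ j ∈ Finset.range n, SCle (gCov L) j G)
      = ∑ j ∈ Finset.range n, SCle (gCov L) j G' := by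
    apply Finset.sum_congr rfl
    intro j hj
    exact SCle_recon (gCov_inv L) (Finset.mem_range.mp hj) hrec
  omega

end ReconAux

open SimpleGraph

/-- The vertex-deleted subgraph `G − v`: the induced subgraph of `G` obtained by
deleting `v` and all edges incident with `v`. -/
abbrev vdel {n : ℕ} (G : SimpleGraph (Fin n)) (v : Fin n) :
    SimpleGraph ({v}ᶜ : Set (Fin n)) :=
  G.induce {v}ᶜ

/-- `H` is a reconstruction of `G`: there is a bijection `f` between the vertex
sets such that `G − v ≅ H − f v` for every vertex `v`. -/
def IsReconstruction {n : ℕ} (G H : SimpleGraph (Fin n)) : Prop :=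
  ∃ f : Fin n ≃ Fin n, ∀ v : Fin n, Nonempty (vdel G v ≃g vdel H (f v))

/-- `s(F,G)`: the number of subgraphs of `G` isomorphic to `F`. -/
noncomputable def subCount {k n : ℕ} (F : SimpleGraph (Fin k))
    (G : SimpleGraph (Fin n)) : ℕ :=
  Nat.card {H : G.Subgraph // Nonempty (F ≃g H.coe)}

/-- A finite sequence of simple graphs (on arbitrary finite vertex sets). -/
abbrev GSeq : Type := List (Σ k : ℕ, SimpleGraph (Fin k))

/-- `c(𝓕,G)`: the number of covers of `G` by the sequence `L`, i.e. of sequences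
of subgraphs of `G`, the `i`-th being isomorphic to the `i`-th graph of `L`,
whose union (of both vertex sets and edge sets) is all of `G`. -/
noncomputable def coverCount {n : ℕ} (L : GSeq) (G : SimpleGraph (Fin n)) : ℕ :=
  Nat.card {C : Fin L.length → G.Subgraph //
    (∀ i, Nonempty ((L.get i).2 ≃g (C i).coe)) ∧ (⨆ i, C i) = ⊤}

/-- `R` is a transversal of the isomorphism classes of graphs in `C`:
it contains exactly one representative of each isomorphism class in `C`. -/
def IsIsoTransversal {n : ℕ} (C : Set (SimpleGraph (Fin n)))
    (R : Finset (SimpleGraph (Fin n))) : Prop :=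
  ↑R ⊆ C ∧ ∀ G ∈ C, ∃! H, H ∈ R ∧ Nonempty (G ≃g H)

/-- `D` is a transversal of the reconstruction classes of graphs in `C`:
it contains exactly one representative of each `∼`-equivalence class in `C`. -/
def IsReconTransversal {n : ℕ} (C : Set (SimpleGraph (Fin n)))
    (D : Finset (SimpleGraph (Fin n))) : Prop :=
  ↑D ⊆ C ∧ ∀ G ∈ C, ∃! H, H ∈ D ∧ IsReconstruction G H

/-- Let `n ≥ 3` and let `𝔉 = (L_1, …, L_l)` be any finite family of sequences of
graphs, each graph having fewer than `n` vertices. Let `M` be the matrix of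
covering numbers `c(L_i, H)`, with rows indexed by `Fin l` and columns indexed
by the isomorphism classes of `n`-vertex graphs (a transversal `R` of all
`n`-vertex graphs). Then `d(n) ≥ rank_ℝ(M)`, where `d(n) = D.card` for any
transversal `D` of the reconstruction classes of `n`-vertex graphs. -/
theorem stmt_7 {n l : ℕ} (hn : 3 ≤ n)
    (𝔉 : Fin l → GSeq) (h𝔉 : ∀ i : Fin l, ∀ F ∈ 𝔉 i, F.1 < n)
    (R : Finset (SimpleGraph (Fin n)))
    (hR : IsIsoTransversal Set.univ R)
    (D : Finset (SimpleGraph (Fin n)))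
    (hD : IsReconTransversal Set.univ D) :
    (Matrix.of fun (i : Fin l) (H : ↥R) =>
        ((coverCount (𝔉 i) (H : SimpleGraph (Fin n)) : ℝ))).rank ≤ D.card := by
  classical
  have hRuniq : ∀ X Y : SimpleGraph (Fin n), X ∈ R → Y ∈ R → Nonempty (X ≃g Y) → X = Y := by
    intro X Y hX hY hiso
    obtain ⟨Z, -, hu⟩ := hR.2 X trivial
    have h1 : X = Z := hu X ⟨hX, ⟨RelIso.refl X.Adj⟩⟩
    have h2 : Y = Z := hu Y ⟨hY, hiso⟩
    rw [h1, h2]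
  set colf : SimpleGraph (Fin n) → (Fin l → ℝ) :=
    fun X i => ((ReconAux.cC (𝔉 i) X : ℕ) : ℝ) with hcolf
  set dvec : SimpleGraph (Fin n) → (Fin l → ℝ) :=
    fun G i => ((ReconAux.SCle (ReconAux.gCov (𝔉 i)) n G : ℕ) : ℝ) with hdvec
  set Wsp : Submodule ℝ (Fin l → ℝ) := Submodule.span ℝ (↑(D.image dvec)) with hWsp
  have key2 : ∀ H : SimpleGraph (Fin n),
      dvec H = ∑ X ∈ R, (ReconAux.spanCount X H : ℝ) • colf X := by
    intro H
    funext i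
    have hgr := ReconAux.SCle_top_group (𝔉 i) H R (fun A => hR.2 A trivial)
    rw [hdvec]
    simp only
    rw [hgr]
    push_cast
    rw [Finset.sum_apply]
    apply Finset.sum_congr rfl
    intro X _
    simp [hcolf]
  have key1 : ∀ G d : SimpleGraph (Fin n), IsReconstruction G d → dvec G = dvec d := by
    rintro G d ⟨f, hf⟩
    funext i
    have := ReconAux.span_recon (𝔉 i) (h𝔉 i) (by omega) ⟨f, hf⟩
    rw [hdvec]
    simp only
    rw [this]
  have key3 : ∀ m : ℕ, ∀ H : SimpleGraph (Fin n), H ∈ R →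
      Nat.card H.edgeSet = m → colf H ∈ Wsp := by
    intro m
    induction m using Nat.strong_induction_on with
    | _ m IH =>
      intro H hHR hHm
      obtain ⟨d, ⟨hdD, hrecd⟩, -⟩ := hD.2 H trivial
      have hdvecmem : dvec H ∈ Wsp := by
        rw [key1 H d hrecd]
        exact Submodule.subset_span (by
          rw [Finset.coe_image]
          exact ⟨d, by simpa using hdD, rfl⟩)
      have hsplit : dvec H = (ReconAux.spanCount H H : ℝ) • colf H +
          ∑ X ∈ R.erase H, (ReconAux.spanCount X H : ℝ) • colf X := by
        rw [key2 H, ← Finset.add_sum_erase R _ hHR]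
      rw [ReconAux.spanCount_self, Nat.cast_one, one_smul] at hsplit
      have hcol : colf H = dvec H -
          ∑ X ∈ R.erase H, (ReconAux.spanCount X H : ℝ) • colf X :=
        eq_sub_of_add_eq hsplit.symm
      rw [hcol]
      apply Submodule.sub_mem _ hdvecmem
      apply Submodule.sum_mem
      intro X hX
      by_cases hz : ReconAux.spanCount X H = 0
      · rw [hz]; simp
      · obtain ⟨hle, heq⟩ := ReconAux.spanCount_edges hz
        have hne : X ≠ H := Finset.ne_of_mem_erase hX
        have hlt : Nat.card X.edgeSet < m := by
          rcases lt_or_eq_of_le hle with h | h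
          · omega
          · exact absurd (hRuniq X H (Finset.mem_of_mem_erase hX) hHR (heq h)) hne
        exact Submodule.smul_mem _ _ (IH _ hlt X (Finset.mem_of_mem_erase hX) rfl)
  rw [Matrix.rank_eq_finrank_span_cols]
  have hsub : Submodule.span ℝ (Set.range (Matrix.transpose (Matrix.of fun (i : Fin l) (H : ↥R) =>
      ((coverCount (𝔉 i) (H : SimpleGraph (Fin n)) : ℝ))))) ≤ Wsp := by
    rw [Submodule.span_le]
    rintro x ⟨X, rfl⟩
    have hcoleq : Matrix.transpose (Matrix.of fun (i : Fin l) (H : ↥R) =>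
        ((coverCount (𝔉 i) (H : SimpleGraph (Fin n)) : ℝ))) X = colf ↑X := by
      funext i
      rfl
    rw [hcoleq]
    exact key3 _ ↑X X.2 rfl
  have h1 : Module.finrank ℝ ↥Wsp ≤ (D.image dvec).card :=
    finrank_span_finset_le_card (D.image dvec)
  have h2 : (D.image dvec).card ≤ D.card := Finset.card_image_le
  exact le_trans (Submodule.finrank_mono hsub) (le_trans h1 h2)
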